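/- Fix ν ∈ {1,…,κ}. Suppose there exist a real number φ ≠ 0 and a vector p ∈ (Fin n → ℝ) such that φ·A_{i,j} = a_{ν,j}·p_i − a_{ν,i}·p_j for all i, j ∈ {1,…,n} (the pointwise form of the closure conditions for a constraint admitting an integrating factor, with p playing the role of the gradient of φ). Then μ_{i,j} = 0 for all i, j ∈ {1,…,n−κ}, where μ is built from a and A using the row index ν. -/
import Mathlib


open Matrix BigOperators

/-- The index `κ + i` of `Fin n`, for `i : Fin (n - κ)`. -/
def shiftIdx {κ n : ℕ} (h : κ < n) (i : Fin (n - κ)) : Fin n :=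
  ⟨κ + i.1, by have := i.2; omega⟩

/-- `D`: determinant of the `κ × κ` submatrix formed by the first `κ` columns of `a`. -/
noncomputable def detD {κ n : ℕ} (h : κ < n) (a : Matrix (Fin κ) (Fin n) ℝ) : ℝ :=
  Matrix.det (Matrix.of fun ν μ : Fin κ => a ν (Fin.castLE h.le μ))

/-- `D_r(ℓ)`: as `D`, but with the `r`-th column replaced by the `ℓ`-th column of `a`. -/
noncomputable def detDr {κ n : ℕ} (h : κ < n) (a : Matrix (Fin κ) (Fin n) ℝ)
    (r : Fin κ) (ℓ : Fin n) : ℝ :=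
  Matrix.det (Matrix.of fun ν μ : Fin κ => a ν (if μ = r then ℓ else Fin.castLE h.le μ))

/-- `D_{r,s}(ℓ,m)`: as `D`, but with the `r`-th and `s`-th columns replaced by the
`ℓ`-th and `m`-th columns of `a`. -/
noncomputable def detDrs {κ n : ℕ} (h : κ < n) (a : Matrix (Fin κ) (Fin n) ℝ)
    (r s : Fin κ) (ℓ m : Fin n) : ℝ :=
  Matrix.det (Matrix.of fun ν μ : Fin κ =>
    a ν (if μ = r then ℓ else if μ = s then m else Fin.castLE h.le μ))

/-- The coefficients `μ_{i,j}` built from the constraint matrix `a` and a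
skew-symmetric matrix `A`. -/
noncomputable def muCoef {κ n : ℕ} (h : κ < n) (a : Matrix (Fin κ) (Fin n) ℝ)
    (A : Matrix (Fin n) (Fin n) ℝ) (i j : Fin (n - κ)) : ℝ :=
  (∑ r : Fin κ,
      (A (Fin.castLE h.le r) (shiftIdx h j) * detDr h a r (shiftIdx h i)
        - A (Fin.castLE h.le r) (shiftIdx h i) * detDr h a r (shiftIdx h j)))
    - A (shiftIdx h i) (shiftIdx h j) * detD h a
    - ∑ r : Fin κ, ∑ s : Fin κ,
        if r < s then
          A (Fin.castLE h.le r) (Fin.castLE h.le s)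
            * detDrs h a r s (shiftIdx h i) (shiftIdx h j)
        else 0


private lemma cramer_key {κ : ℕ} (M : Matrix (Fin κ) (Fin κ) ℝ) (v : Fin κ → ℝ) (k : Fin κ) :
    ∑ r, M k r * (M.updateCol r v).det = v k * M.det := by
  have := congrFun (Matrix.mulVec_cramer M v) k
  simpa [Matrix.mulVec, dotProduct, Matrix.cramer_apply, mul_comm] using this

private lemma detDr_eq {κ n : ℕ} (h : κ < n) (a : Matrix (Fin κ) (Fin n) ℝ)
    (r : Fin κ) (ℓ : Fin n) :
    detDr h a r ℓ =
      ((Matrix.of fun ν μ : Fin κ => a ν (Fin.castLE h.le μ)).updateCol r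
        (fun k => a k ℓ)).det := by
  unfold detDr
  congr 1
  ext i μ
  simp [Matrix.updateCol_apply, apply_ite (a i)]

private lemma sum_detDr {κ n : ℕ} (h : κ < n) (a : Matrix (Fin κ) (Fin n) ℝ)
    (ℓ : Fin n) (ν : Fin κ) :
    ∑ r, a ν (Fin.castLE h.le r) * detDr h a r ℓ = a ν ℓ * detD h a := by
  simp_rw [detDr_eq]
  have := cramer_key (Matrix.of fun ν μ : Fin κ => a ν (Fin.castLE h.le μ)) (fun k => a k ℓ) ν
  simpa [detD] using this

private lemma detDrs_eq {κ n : ℕ} (h : κ < n) (a : Matrix (Fin κ) (Fin n) ℝ)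
    {r s : Fin κ} (hrs : r ≠ s) (ℓ m : Fin n) :
    detDrs h a r s ℓ m =
      (((Matrix.of fun ν μ : Fin κ => a ν (Fin.castLE h.le μ)).updateCol r
        (fun k => a k ℓ)).updateCol s (fun k => a k m)).det := by
  unfold detDrs
  congr 1
  ext i μ
  by_cases h1 : μ = r
  · subst h1; simp [Matrix.updateCol_apply, hrs]
  · by_cases h2 : μ = s <;> simp [Matrix.updateCol_apply, h1, h2, Ne.symm hrs]

private lemma detDrs_antisymm {κ n : ℕ} (h : κ < n) (a : Matrix (Fin κ) (Fin n) ℝ)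
    {r s : Fin κ} (hrs : r ≠ s) (ℓ m : Fin n) :
    detDrs h a s r ℓ m = - detDrs h a r s ℓ m := by
  unfold detDrs
  have : (Matrix.of fun ν μ : Fin κ =>
      a ν (if μ = s then ℓ else if μ = r then m else Fin.castLE h.le μ)) =
      (Matrix.of fun ν μ : Fin κ =>
      a ν (if μ = r then ℓ else if μ = s then m else Fin.castLE h.le μ)).submatrix
        id (Equiv.swap r s) := by
    ext i μ
    by_cases h1 : μ = r
    · subst h1
      simp [Matrix.submatrix_apply, Equiv.swap_apply_left, hrs, Ne.symm hrs]
    · by_cases h2 : μ = s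
      · subst h2
        simp [Matrix.submatrix_apply, Equiv.swap_apply_right, hrs, Ne.symm hrs]
      · simp [Matrix.submatrix_apply, Equiv.swap_apply_of_ne_of_ne h1 h2, h1, h2]
  rw [this, Matrix.det_permute', Equiv.Perm.sign_swap hrs]
  push_cast
  ring

private lemma sum_detDrs {κ n : ℕ} (h : κ < n) (a : Matrix (Fin κ) (Fin n) ℝ)
    (ν : Fin κ) (r : Fin κ) (ℓ m : Fin n) :
    ∑ s, (if s = r then (0:ℝ) else a ν (Fin.castLE h.le s) * detDrs h a r s ℓ m)
      = a ν m * detDr h a r ℓ - a ν ℓ * detDr h a r m := by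
  set M : Matrix (Fin κ) (Fin κ) ℝ := Matrix.of fun ν μ : Fin κ => a ν (Fin.castLE h.le μ) with hM
  set M' := M.updateCol r (fun k => a k ℓ) with hM'
  have key := cramer_key M' (fun k => a k m) ν
  have hdet : M'.det = detDr h a r ℓ := (detDr_eq h a r ℓ).symm
  have hterm : M' ν r * ((M'.updateCol r (fun k => a k m)).det) =
      a ν ℓ * detDr h a r m := by
    have h1 : M' ν r = a ν ℓ := by simp [hM', Matrix.updateCol_self]
    have h2 : M'.updateCol r (fun k => a k m) = M.updateCol r (fun k => a k m) := by
      ext i μ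
      by_cases hmu : μ = r <;> simp [Matrix.updateCol_apply, hmu, hM']
    rw [h1, h2, ← detDr_eq h a r m]
  have split : ∑ s, (if s = r then (0:ℝ) else a ν (Fin.castLE h.le s) * detDrs h a r s ℓ m)
      = (∑ s, M' ν s * ((M'.updateCol s (fun k => a k m)).det))
        - M' ν r * ((M'.updateCol r (fun k => a k m)).det) := by
    rw [eq_sub_iff_add_eq, ← Finset.sum_add_sum_compl {r}]
    rw [Finset.sum_singleton, if_pos rfl, zero_add]
    rw [add_comm, ← Finset.sum_add_sum_compl {r} (f := fun s => M' ν s * _)]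
    rw [Finset.sum_singleton]
    congr 1
    apply Finset.sum_congr rfl
    intro s hs
    simp only [Finset.mem_compl, Finset.mem_singleton] at hs
    rw [if_neg hs, detDrs_eq h a (Ne.symm hs)]
    congr 1
    simp [hM, hM', Matrix.updateCol_apply, hs]
  rw [split, key, hterm, hdet]

private lemma sum_lt_pairs {κ : ℕ} (g : Fin κ → Fin κ → ℝ) :
    (∑ r, ∑ s, if r < s then g r s + g s r else 0)
      = ∑ r, ∑ s, if s = r then 0 else g r s := by
  have h1 : ∀ r s : Fin κ, (if r < s then g r s + g s r else 0)
      = (if r < s then g r s else 0) + (if r < s then g s r else 0) := by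
    intro r s; split <;> simp
  simp_rw [h1, Finset.sum_add_distrib]
  rw [Finset.sum_comm (f := fun r s => if r < s then g s r else 0)]
  rw [← Finset.sum_add_distrib]
  refine Finset.sum_congr rfl fun r _ => ?_
  rw [← Finset.sum_add_distrib]
  refine Finset.sum_congr rfl fun s _ => ?_
  rcases lt_trichotomy r s with hlt | heq | hgt
  · simp [hlt, not_lt_of_gt hlt, (ne_of_lt hlt).symm]
  · subst heq; simp
  · simp [hgt, not_lt_of_gt hgt, ne_of_lt hgt]

/-- If the pointwise closure conditions for a constraint admitting an integrating factor
hold, i.e. `φ·A_{i,j} = a_{ν,j}·p_i − a_{ν,i}·p_j` for some `φ ≠ 0` and some vector `p`,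
then all coefficients `μ_{i,j}` vanish. -/
theorem muCoef_vanishes_of_closure
    (κ n : ℕ) (h : κ < n)
    (a : Matrix (Fin κ) (Fin n) ℝ)
    (A : Matrix (Fin n) (Fin n) ℝ)
    (hA : ∀ i j : Fin n, A j i = -A i j)
    (ν : Fin κ)
    (φ : ℝ) (hφ : φ ≠ 0)
    (p : Fin n → ℝ)
    (hclos : ∀ i j : Fin n, φ * A i j = a ν j * p i - a ν i * p j) :
    ∀ i j : Fin (n - κ), muCoef h a A i j = 0 := by
  intro i j
  set l := shiftIdx h i with hl
  set m := shiftIdx h j with hm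
  have hsum_l := sum_detDr h a l ν
  have hsum_m := sum_detDr h a m ν
  have hmain : φ * muCoef h a A i j = 0 := by
    unfold muCoef
    rw [← hl, ← hm, mul_sub, mul_sub]
    have e1 : φ * (∑ r : Fin κ,
        (A (Fin.castLE h.le r) m * detDr h a r l - A (Fin.castLE h.le r) l * detDr h a r m))
        = ∑ r : Fin κ,
          ((a ν m * p (Fin.castLE h.le r) - a ν (Fin.castLE h.le r) * p m) * detDr h a r l
            - (a ν l * p (Fin.castLE h.le r) - a ν (Fin.castLE h.le r) * p l) * detDr h a r m) := by
      rw [Finset.mul_sum]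
      refine Finset.sum_congr rfl fun r _ => ?_
      rw [mul_sub, ← mul_assoc, ← mul_assoc, hclos, hclos]
    have e2 : φ * (A l m * detD h a) = (a ν m * p l - a ν l * p m) * detD h a := by
      rw [← mul_assoc, hclos]
    have e3 : φ * (∑ r : Fin κ, ∑ s : Fin κ,
          if r < s then
            A (Fin.castLE h.le r) (Fin.castLE h.le s) * detDrs h a r s l m
          else 0)
        = ∑ r : Fin κ, p (Fin.castLE h.le r)
            * (a ν m * detDr h a r l - a ν l * detDr h a r m) := by
      have st1 : φ * (∑ r : Fin κ, ∑ s : Fin κ,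
            if r < s then
              A (Fin.castLE h.le r) (Fin.castLE h.le s) * detDrs h a r s l m
            else 0)
          = ∑ r : Fin κ, ∑ s : Fin κ,
            if r < s then
              (a ν (Fin.castLE h.le s) * p (Fin.castLE h.le r) * detDrs h a r s l m)
                + (a ν (Fin.castLE h.le r) * p (Fin.castLE h.le s) * detDrs h a s r l m)
            else 0 := by
        rw [Finset.mul_sum]
        refine Finset.sum_congr rfl fun r _ => ?_
        rw [Finset.mul_sum]
        refine Finset.sum_congr rfl fun s _ => ?_
        rw [mul_ite, mul_zero]
        by_cases hrs : r < s
        · rw [if_pos hrs, if_pos hrs, ← mul_assoc, hclos,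
            detDrs_antisymm h a (ne_of_lt hrs)]
          ring
        · rw [if_neg hrs, if_neg hrs]
      rw [st1, sum_lt_pairs (fun r s =>
        a ν (Fin.castLE h.le s) * p (Fin.castLE h.le r) * detDrs h a r s l m)]
      refine Finset.sum_congr rfl fun r _ => ?_
      rw [← sum_detDrs h a ν r l m, Finset.mul_sum]
      refine Finset.sum_congr rfl fun s _ => ?_
      split <;> ring
    rw [e1, e2, e3, sub_right_comm, ← Finset.sum_sub_distrib]
    have e4 : ∀ r : Fin κ,
        ((a ν m * p (Fin.castLE h.le r) - a ν (Fin.castLE h.le r) * p m) * detDr h a r l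
          - (a ν l * p (Fin.castLE h.le r) - a ν (Fin.castLE h.le r) * p l) * detDr h a r m)
          - p (Fin.castLE h.le r) * (a ν m * detDr h a r l - a ν l * detDr h a r m)
        = -(p m) * (a ν (Fin.castLE h.le r) * detDr h a r l)
            + p l * (a ν (Fin.castLE h.le r) * detDr h a r m) := fun r => by ring
    rw [Finset.sum_congr rfl fun r _ => e4 r, Finset.sum_add_distrib,
      ← Finset.mul_sum, ← Finset.mul_sum, hsum_l, hsum_m]
    ring
  exact (mul_eq_zero.mp hmain).resolve_left hφ
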